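/- The reduced Bernstein polynomial admits the equivalent characterization without the f^{s+1} term: b(s)h^s = P(s)·h^{s+1} + Σᵢ Pᵢ(s)·h'_{xᵢ}h^s for some P, Pᵢ ∈ 𝒟[s] if and only if b(s)h^s = Σᵢ Qᵢ(s)·h'_{xᵢ}h^s for some Qᵢ(s) ∈ 𝒟[s]. Equivalently, h^{s+1} ∈ 𝒟[s](h'_{x₁},…,h'_{xₙ})h^s, i.e. h ∈ 𝒟[s](h'_{x₁},…,h'_{xₙ}) + Ann_{𝒟[s]}h^s. -/
import Mathlib


open Polynomial

noncomputable section

set_option maxHeartbeats 1000000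
set_option synthInstance.maxHeartbeats 400000

/-- The ring `𝒪` of germs (polynomial model `ℂ[x₁,…,xₙ]`). -/
abbrev OO (n : ℕ) := MvPolynomial (Fin n) ℂ
/-- The fraction field of `𝒪`. -/
abbrev KK (n : ℕ) := FractionRing (OO n)

variable {n : ℕ}

/-- Inclusion `𝒪 → K`. -/
def toK {n : ℕ} (r : OO n) : KK n := algebraMap _ _ r

/-- A family of derivations of `K` extending the partial derivatives `∂/∂xᵢ` of `𝒪`. -/
def ExtendsPderiv (d : Fin n → Derivation ℂ (KK n) (KK n)) : Prop :=
  ∀ (i : Fin n) (r : OO n), d i (toK r) = toK (MvPolynomial.pderiv i r)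

/-- Coefficientwise action of a derivation of `K` on `K[s]`. -/
def coeffDer (d : Derivation ℂ (KK n) (KK n)) :
    Derivation ℂ (Polynomial (KK n)) (Polynomial (KK n)) :=
  PolynomialModule.equivPolynomialSelf.compDer d.mapCoeffs

/-- Multiplication operator on `K[s]`. -/
def mulOp (a : Polynomial (KK n)) : Module.End ℂ (Polynomial (KK n)) :=
  LinearMap.mulLeft ℂ a

/-- Twisted partial-derivative operator on `K[s]·f^s`:
`∂ᵢ(g(s) f^s) = ((∂ᵢ g)(s) + s·g(s)·(∂ᵢf/f))·f^s`. -/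
def Dop (d : Derivation ℂ (KK n) (KK n)) (f : OO n) : Module.End ℂ (Polynomial (KK n)) :=
  (coeffDer d).toLinearMap + mulOp (Polynomial.X * Polynomial.C (d (toK f) / toK f))

/-- The image of `𝒟[s]` in `End(K[s]·f^s)`: the ℂ-algebra generated by multiplications by
elements of `𝒪`, multiplication by `s`, and the twisted partials `∂ᵢ`. -/
def WeylS (d : Fin n → Derivation ℂ (KK n) (KK n)) (f : OO n) :
    Subalgebra ℂ (Module.End ℂ (Polynomial (KK n))) :=
  Algebra.adjoin ℂ
    ((Set.range fun r : OO n => mulOp (Polynomial.C (toK r))) ∪ {mulOp Polynomial.X} ∪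
      Set.range fun i => Dop (d i) f)

/-- The `𝒟[s]`-orbit span `𝒟[s]·T` of a set `T ⊆ K[s]·f^s`. -/
def DSpan (d : Fin n → Derivation ℂ (KK n) (KK n)) (f : OO n)
    (T : Set (Polynomial (KK n))) : Submodule ℂ (Polynomial (KK n)) :=
  Submodule.span ℂ {y | ∃ P ∈ WeylS d f, ∃ t ∈ T, y = P t}

/-- The image of `𝒟` in `End(K)` (untwisted action). -/
def Weyl0 (d : Fin n → Derivation ℂ (KK n) (KK n)) : Subalgebra ℂ (Module.End ℂ (KK n)) :=
  Algebra.adjoin ℂ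
    ((Set.range fun r : OO n => LinearMap.mulLeft ℂ (toK r)) ∪
      Set.range fun i => (d i).toLinearMap)

/-- The `𝒟`-orbit span `𝒟·T` of a set `T ⊆ K`. -/
def DSpan0 (d : Fin n → Derivation ℂ (KK n) (KK n)) (T : Set (KK n)) : Submodule ℂ (KK n) :=
  Submodule.span ℂ {y | ∃ P ∈ Weyl0 d, ∃ t ∈ T, y = P t}

/-- The ℂ-submodule `Σ_{g ∈ G} 𝒪[1/g]` of `K`. -/
def locSub (G : Set (OO n)) : Submodule ℂ (KK n) :=
  Submodule.span ℂ {x | ∃ r : OO n, ∃ g ∈ G, ∃ k : ℕ, x = toK r * (toK g)⁻¹ ^ k}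

/-- Polynomials in `s` all of whose coefficients lie in `V`. -/
def polySub (V : Submodule ℂ (KK n)) : Submodule ℂ (Polynomial (KK n)) where
  carrier := {g | ∀ m, g.coeff m ∈ V}
  add_mem' := fun ha hb m => by simpa using V.add_mem (ha m) (hb m)
  zero_mem' := fun m => by rw [Polynomial.coeff_zero]; exact V.zero_mem
  smul_mem' := fun c g hg m => by
    simpa [Polynomial.coeff_smul] using V.smul_mem c (hg m)

/-- Maximal `(p+1)×(p+1)` minor of the Jacobian matrix of `(h₁,…,h_p,f)`
on the columns `cols`. -/
def minorHF {p : ℕ} (h : Fin p → OO n) (f : OO n) (cols : Fin (p + 1) → Fin n) : OO n :=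
  Matrix.det (Matrix.of fun i j =>
    Fin.lastCases (MvPolynomial.pderiv (cols j) f)
      (fun i' => MvPolynomial.pderiv (cols j) (h i')) i)

/-- `p×p` minor of the Jacobian matrix of `h = (h₁,…,h_p)` on the columns `cols`. -/
def minorH {p : ℕ} (h : Fin p → OO n) (cols : Fin p → Fin n) : OO n :=
  Matrix.det (Matrix.of fun i j => MvPolynomial.pderiv (cols j) (h i))

/-- Image of `b(s) ∈ ℂ[s]` in `K[s]`. -/
def bK {n : ℕ} (b : Polynomial ℂ) : Polynomial (KK n) :=
  b.map ((algebraMap (OO n) (KK n)).comp MvPolynomial.C)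

/-! ### Auxiliary lemmas -/

section Auxiliary

variable {n : ℕ}

lemma toK_injective : Function.Injective (toK (n := n)) :=
  IsFractionRing.injective (OO n) (KK n)

lemma toK_ne_zero {r : OO n} (hr : r ≠ 0) : toK r ≠ 0 := fun h0 =>
  hr (toK_injective (by simpa [toK] using h0))

lemma toK_mul (a b : OO n) : toK (a * b) = toK a * toK b := map_mul _ _ _

lemma toK_add (a b : OO n) : toK (a + b) = toK a + toK b := map_add _ _ _

lemma coeffDer_apply (d : Derivation ℂ (KK n) (KK n)) (p : Polynomial (KK n)) :
    coeffDer d p = PolynomialModule.equivPolynomialSelf (d.mapCoeffs p) := by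
  rw [coeffDer]
  exact congrFun (Derivation.linearEquiv_coe_comp _ _) p

lemma coeffDer_C (d : Derivation ℂ (KK n) (KK n)) (c : KK n) :
    coeffDer d (Polynomial.C c) = Polynomial.C (d c) := by
  rw [coeffDer_apply, Derivation.mapCoeffs_C, PolynomialModule.equivPolynomialSelf_apply_eq,
    PolynomialModule.equivPolynomial_single, Polynomial.monomial_zero_left]

lemma mulOp_apply (a x : Polynomial (KK n)) : mulOp a x = a * x := rfl

lemma Dop_C (d : Derivation ℂ (KK n) (KK n)) (f : OO n) (c : KK n) :
    Dop d f (Polynomial.C c) =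
      Polynomial.C (d c) + Polynomial.X * Polynomial.C (d (toK f) / toK f * c) := by
  have hD : Dop d f = (coeffDer d).toLinearMap
      + mulOp (Polynomial.X * Polynomial.C (d (toK f) / toK f)) := rfl
  rw [hD, LinearMap.add_apply, Derivation.coeFn_coe, coeffDer_C, mulOp_apply, map_mul, mul_assoc]

/-- The key computation : `Dᵢ ((h·a)·h^s) = (∂ᵢh·a + h·∂ᵢa)·h^s + s·(a·∂ᵢh)·h^s`. -/
lemma Dop_C_mul (d : Fin n → Derivation ℂ (KK n) (KK n)) (hd : ExtendsPderiv d)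
    (h : OO n) (h0 : h ≠ 0) (i : Fin n) (a : OO n) :
    Dop (d i) h (Polynomial.C (toK (h * a))) =
      Polynomial.C (toK (a * MvPolynomial.pderiv i h))
        + Polynomial.C (toK (h * MvPolynomial.pderiv i a))
        + Polynomial.X * Polynomial.C (toK (a * MvPolynomial.pderiv i h)) := by
  rw [Dop_C]
  have h1 : (d i) (toK (h * a)) = toK (a * MvPolynomial.pderiv i h)
      + toK (h * MvPolynomial.pderiv i a) := by
    rw [hd i (h * a), MvPolynomial.pderiv_mul,
      show MvPolynomial.pderiv i h * a + h * MvPolynomial.pderiv i a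
          = a * MvPolynomial.pderiv i h + h * MvPolynomial.pderiv i a by ring,
      toK_add]
  have h2 : (d i) (toK h) / toK h * toK (h * a) = toK (a * MvPolynomial.pderiv i h) := by
    rw [hd i h, toK_mul, toK_mul]
    rw [div_mul_eq_mul_div, mul_comm (toK h) (toK a), ← mul_assoc,
      mul_div_assoc, div_self (toK_ne_zero h0), mul_one, mul_comm]
  rw [h1, h2, map_add]

lemma mulOpC_mem (d : Fin n → Derivation ℂ (KK n) (KK n)) (f : OO n) (r : OO n) :
    mulOp (Polynomial.C (toK r)) ∈ WeylS d f :=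
  Algebra.subset_adjoin (Or.inl (Or.inl ⟨r, rfl⟩))

lemma mulOpX_mem (d : Fin n → Derivation ℂ (KK n) (KK n)) (f : OO n) :
    mulOp Polynomial.X ∈ WeylS d f :=
  Algebra.subset_adjoin (Or.inl (Or.inr rfl))

lemma Dop_mem (d : Fin n → Derivation ℂ (KK n) (KK n)) (f : OO n) (i : Fin n) :
    Dop (d i) f ∈ WeylS d f :=
  Algebra.subset_adjoin (Or.inr ⟨i, rfl⟩)

/-- `DSpan` is stable under the action of `WeylS`. -/
lemma DSpan_apply_mem (d : Fin n → Derivation ℂ (KK n) (KK n)) (f : OO n)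
    (T : Set (Polynomial (KK n))) {P : Module.End ℂ (Polynomial (KK n))} (hP : P ∈ WeylS d f)
    {x : Polynomial (KK n)} (hx : x ∈ DSpan d f T) : P x ∈ DSpan d f T := by
  refine Submodule.span_induction (p := fun y _ => P y ∈ DSpan d f T) ?_ ?_ ?_ ?_ hx
  · rintro y ⟨Q, hQ, t, ht, rfl⟩
    exact Submodule.subset_span ⟨P * Q, mul_mem hP hQ, t, ht, rfl⟩
  · simp only [map_zero]
    exact (DSpan d f T).zero_mem
  · intro a b _ _ ha hb
    rw [map_add]
    exact Submodule.add_mem _ ha hb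
  · intro c a _ ha
    rw [map_smul]
    exact Submodule.smul_mem _ c ha

lemma mem_DSpan_of_mem (d : Fin n → Derivation ℂ (KK n) (KK n)) (f : OO n)
    (T : Set (Polynomial (KK n))) {t : Polynomial (KK n)} (ht : t ∈ T) : t ∈ DSpan d f T :=
  Submodule.subset_span ⟨1, one_mem _, t, ht, rfl⟩

/-- Every element of the `𝒟[s]`-span of the partials can be written as a single sum
`Σᵢ Qᵢ(∂ᵢh·h^s)`. -/
lemma DSpan_eq_sum (d : Fin n → Derivation ℂ (KK n) (KK n)) (h : OO n)
    {x : Polynomial (KK n)}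
    (hx : x ∈ DSpan d h {y | ∃ i : Fin n, y = Polynomial.C (toK (MvPolynomial.pderiv i h))}) :
    ∃ Qi : Fin n → Module.End ℂ (Polynomial (KK n)),
      (∀ i, Qi i ∈ WeylS d h) ∧
      x = ∑ i : Fin n, Qi i (Polynomial.C (toK (MvPolynomial.pderiv i h))) := by
  refine Submodule.span_induction (p := fun y _ => ∃ Qi : Fin n → Module.End ℂ (Polynomial (KK n)),
      (∀ i, Qi i ∈ WeylS d h) ∧
      y = ∑ i : Fin n, Qi i (Polynomial.C (toK (MvPolynomial.pderiv i h)))) ?_ ?_ ?_ ?_ hx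
  · rintro y ⟨Q, hQ, t, ⟨i0, rfl⟩, rfl⟩
    refine ⟨fun j => if j = i0 then Q else 0, fun j => ?_, ?_⟩
    · by_cases hj : j = i0 <;> simp [hj, hQ, zero_mem]
    · rw [Finset.sum_eq_single i0]
      · simp
      · intro j _ hj
        simp [hj]
      · simp
  · exact ⟨fun _ => 0, fun _ => zero_mem _, by simp⟩
  · rintro a b _ _ ⟨Qa, hQa, rfl⟩ ⟨Qb, hQb, rfl⟩
    refine ⟨fun i => Qa i + Qb i, fun i => add_mem (hQa i) (hQb i), ?_⟩
    rw [← Finset.sum_add_distrib]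
    simp [LinearMap.add_apply]
  · rintro c a _ ⟨Qa, hQa, rfl⟩
    refine ⟨fun i => c • Qa i, fun i => Subalgebra.smul_mem _ (hQa i) c, ?_⟩
    rw [Finset.smul_sum]
    simp [LinearMap.smul_apply]

/-- A nonzero polynomial of total degree zero is a nonzero constant. -/
lemma eq_C_of_totalDegree_zero {g : OO n} (hg : g.totalDegree = 0) :
    g = MvPolynomial.C (MvPolynomial.coeff 0 g) := by
  ext m
  rw [MvPolynomial.coeff_C]
  split_ifs with hm
  · rw [← hm]
  · by_contra hc
    have hms : m ∈ g.support := MvPolynomial.mem_support_iff.mpr hc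
    have hz := (MvPolynomial.totalDegree_eq_zero_iff _ g).mp hg m hms
    apply hm
    ext j
    simp [hz]

private lemma sum_sub_single {m : Fin n →₀ ℕ} {i : Fin n} (hmi : m i ≠ 0) :
    ((m - Finsupp.single i 1).sum fun _ e => e) + 1 = m.sum fun _ e => e := by
  have hle : Finsupp.single i 1 ≤ m := by
    rw [Finsupp.single_le_iff]
    omega
  have hadd : (m - Finsupp.single i 1) + Finsupp.single i 1 = m := tsub_add_cancel_of_le hle
  calc ((m - Finsupp.single i 1).sum fun _ e => e) + 1
      = ((m - Finsupp.single i 1).sum fun _ e => e)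
        + ((Finsupp.single i 1).sum fun _ e => e) := by
        rw [Finsupp.sum_single_index]; rfl
    _ = ((m - Finsupp.single i 1) + Finsupp.single i 1).sum fun _ e => e := by
        rw [Finsupp.sum_add_index' (fun _ => rfl) (fun _ _ _ => rfl)]
    _ = m.sum fun _ e => e := by rw [hadd]

/-- If the total degree is positive, some partial derivative is nonzero (char 0). -/
lemma exists_pderiv_ne_zero {g : OO n} (hg : g.totalDegree ≠ 0) :
    ∃ i : Fin n, MvPolynomial.pderiv i g ≠ 0 := by
  have hsupp : g.support.Nonempty := by
    rcases Finset.eq_empty_or_nonempty g.support with he | hne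
    · exfalso
      apply hg
      simp [MvPolynomial.totalDegree, he]
    · exact hne
  obtain ⟨m, hm, hmax⟩ := Finset.exists_mem_eq_sup g.support hsupp
      (fun m => m.sum fun _ e => e)
  have hg' : (m.sum fun _ e => e) ≠ 0 := by
    rw [MvPolynomial.totalDegree] at hg
    rwa [hmax] at hg
  have hmi : ∃ i, m i ≠ 0 := by
    by_contra hc
    push_neg at hc
    apply hg'
    have : m = 0 := Finsupp.ext fun i => hc i
    rw [this]
    simp
  obtain ⟨i, hi⟩ := hmi
  refine ⟨i, fun hz => ?_⟩
  have hcoeff : MvPolynomial.coeff (m - Finsupp.single i 1) (MvPolynomial.pderiv i g)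
      = MvPolynomial.coeff m g * (m i : ℂ) := by
    conv_lhs => rw [← MvPolynomial.support_sum_monomial_coeff g]
    rw [map_sum]
    simp_rw [MvPolynomial.pderiv_monomial]
    rw [MvPolynomial.coeff_sum]
    simp_rw [MvPolynomial.coeff_monomial]
    rw [Finset.sum_eq_single_of_mem m hm]
    · rw [if_pos rfl]
    · intro m' hm' hne
      split_ifs with heq
      · rcases Nat.eq_zero_or_pos (m' i) with h0 | hpos
        · rw [h0]
          simp
        · exfalso
          apply hne
          have hle' : Finsupp.single i 1 ≤ m' := by
            rw [Finsupp.single_le_iff]; omega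
          have hle : Finsupp.single i 1 ≤ m := by
            rw [Finsupp.single_le_iff]; omega
          calc m' = (m' - Finsupp.single i 1) + Finsupp.single i 1 :=
                (tsub_add_cancel_of_le hle').symm
            _ = (m - Finsupp.single i 1) + Finsupp.single i 1 := by rw [heq]
            _ = m := tsub_add_cancel_of_le hle
      · rfl
  rw [hz] at hcoeff
  simp only [MvPolynomial.coeff_zero] at hcoeff
  have h1 : MvPolynomial.coeff m g ≠ 0 := MvPolynomial.mem_support_iff.mp hm
  have h2 : (m i : ℂ) ≠ 0 := Nat.cast_ne_zero.mpr hi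
  exact h1 (by
    rcases mul_eq_zero.mp hcoeff.symm with h | h
    · exact h
    · exact absurd h h2)

/-- Partial differentiation strictly decreases total degree (when the result is nonzero). -/
lemma totalDegree_pderiv_lt {g : OO n} (i : Fin n)
    (hne : MvPolynomial.pderiv i g ≠ 0) :
    (MvPolynomial.pderiv i g).totalDegree < g.totalDegree := by
  have hpos : g.totalDegree ≠ 0 := by
    intro h0
    apply hne
    rw [eq_C_of_totalDegree_zero h0]
    exact MvPolynomial.pderiv_C
  have hbound : (MvPolynomial.pderiv i g).totalDegree ≤ g.totalDegree - 1 := by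
    conv_lhs => rw [← MvPolynomial.support_sum_monomial_coeff g]
    rw [map_sum]
    refine (MvPolynomial.totalDegree_finset_sum _ _).trans (Finset.sup_le fun m hm => ?_)
    rw [MvPolynomial.pderiv_monomial]
    rcases Nat.eq_zero_or_pos (m i) with h0 | hpos'
    · rw [h0]
      simp
    refine (MvPolynomial.totalDegree_monomial_le _ _).trans ?_
    show ((m - Finsupp.single i 1).sum fun _ e => e) ≤ g.totalDegree - 1
    have hms : (m.sum fun _ e => e) ≤ g.totalDegree := by
      rw [MvPolynomial.totalDegree]
      exact Finset.le_sup (f := fun (m : Fin n →₀ ℕ) => m.sum fun _ e => e) hm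
    have := sum_sub_single (m := m) (i := i) (by omega)
    omega
  omega

/-- A nonzero ideal-like subset of `ℂ[x₁,…,xₙ]` stable under scalars and all partial
derivatives contains `1`. -/
lemma one_mem_of_pderiv_stable (W : Set (OO n))
    (hC : ∀ (c : ℂ) (a : OO n), a ∈ W → MvPolynomial.C c * a ∈ W)
    (hD : ∀ (i : Fin n) (a : OO n), a ∈ W → MvPolynomial.pderiv i a ∈ W) :
    ∀ (k : ℕ) (g : OO n), g ∈ W → g ≠ 0 → g.totalDegree ≤ k → (1 : OO n) ∈ W := by
  intro k
  induction k with
  | zero =>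
    intro g hg hg0 hdg
    have h0 : g.totalDegree = 0 := Nat.le_zero.mp hdg
    obtain ⟨c, hcg⟩ : ∃ c, g = MvPolynomial.C c := ⟨_, eq_C_of_totalDegree_zero h0⟩
    have hc : c ≠ 0 := fun hzero => hg0 (by rw [hcg, hzero, map_zero])
    have h1 : MvPolynomial.C c⁻¹ * g ∈ W := hC c⁻¹ g hg
    rw [hcg, ← map_mul, inv_mul_cancel₀ hc, map_one] at h1
    exact h1
  | succ k ih =>
    intro g hg hg0 hdg
    by_cases hk : g.totalDegree ≤ k
    · exact ih g hg hg0 hk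
    · have hne0 : g.totalDegree ≠ 0 := by omega
      obtain ⟨i, hi⟩ := exists_pderiv_ne_zero hne0
      have hlt := totalDegree_pderiv_lt i hi
      exact ih _ (hD i g hg) hi (by omega)

end Auxiliary

/-- the reduced Bernstein polynomial admits the equivalent characterization
without the `h^(s+1)` term: `b(s)h^s = P(s)·h^(s+1) + Σᵢ Pᵢ(s)·h'_{xᵢ}h^s` for some
`P, Pᵢ ∈ 𝒟[s]` iff `b(s)h^s = Σᵢ Qᵢ(s)·h'_{xᵢ}h^s` for some `Qᵢ ∈ 𝒟[s]`;
equivalently, `h^(s+1) ∈ 𝒟[s](h'_{x₁},…,h'_{xₙ})h^s`. -/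
theorem reduced_bernstein_characterization (n : ℕ)
    (d : Fin n → Derivation ℂ (KK n) (KK n)) (hd : ExtendsPderiv d)
    (h : OO n) (h0 : h ≠ 0) (hnu : MvPolynomial.constantCoeff h = 0) :
    (∀ b : Polynomial ℂ,
      (∃ P ∈ WeylS d h, ∃ Pi : Fin n → Module.End ℂ (Polynomial (KK n)),
        (∀ i, Pi i ∈ WeylS d h) ∧
        bK b = P (Polynomial.C (toK h))
          + ∑ i : Fin n, Pi i (Polynomial.C (toK (MvPolynomial.pderiv i h)))) ↔
      (∃ Qi : Fin n → Module.End ℂ (Polynomial (KK n)),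
        (∀ i, Qi i ∈ WeylS d h) ∧
        bK b = ∑ i : Fin n, Qi i (Polynomial.C (toK (MvPolynomial.pderiv i h))))) ∧
    Polynomial.C (toK h) ∈
      DSpan d h {y | ∃ i : Fin n, y = Polynomial.C (toK (MvPolynomial.pderiv i h))} := by
  set T : Set (Polynomial (KK n)) :=
    {y | ∃ i : Fin n, y = Polynomial.C (toK (MvPolynomial.pderiv i h))} with hT
  -- the set of `a` with `h·a·h^s` in the span
  set W : Set (OO n) := {a | Polynomial.C (toK (h * a)) ∈ DSpan d h T} with hW
  -- W is closed under multiplication by elements of 𝒪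
  have hWmul : ∀ (r : OO n) (a : OO n), a ∈ W → r * a ∈ W := by
    intro r a ha
    have : mulOp (Polynomial.C (toK r)) (Polynomial.C (toK (h * a))) ∈ DSpan d h T :=
      DSpan_apply_mem d h T (mulOpC_mem d h r) ha
    have heq : mulOp (Polynomial.C (toK r)) (Polynomial.C (toK (h * a)))
        = Polynomial.C (toK (h * (r * a))) := by
      rw [mulOp_apply, ← Polynomial.C_mul, ← toK_mul, mul_left_comm]
    rwa [heq] at this
  -- the partials of h are in W
  have hWpd : ∀ i : Fin n, MvPolynomial.pderiv i h ∈ W := by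
    intro i
    have hgen : Polynomial.C (toK (MvPolynomial.pderiv i h)) ∈ DSpan d h T :=
      mem_DSpan_of_mem d h T ⟨i, rfl⟩
    have : mulOp (Polynomial.C (toK h)) (Polynomial.C (toK (MvPolynomial.pderiv i h)))
        ∈ DSpan d h T := DSpan_apply_mem d h T (mulOpC_mem d h h) hgen
    have heq : mulOp (Polynomial.C (toK h)) (Polynomial.C (toK (MvPolynomial.pderiv i h)))
        = Polynomial.C (toK (h * MvPolynomial.pderiv i h)) := by
      rw [mulOp_apply, ← Polynomial.C_mul, ← toK_mul]
    rwa [heq] at this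
  -- W is closed under partial differentiation
  have hWD : ∀ (i : Fin n) (a : OO n), a ∈ W → MvPolynomial.pderiv i a ∈ W := by
    intro i a ha
    have h1 : Dop (d i) h (Polynomial.C (toK (h * a))) ∈ DSpan d h T :=
      DSpan_apply_mem d h T (Dop_mem d h i) ha
    rw [Dop_C_mul d hd h h0 i a] at h1
    have hgen : Polynomial.C (toK (MvPolynomial.pderiv i h)) ∈ DSpan d h T :=
      mem_DSpan_of_mem d h T ⟨i, rfl⟩
    have h2 : Polynomial.C (toK (a * MvPolynomial.pderiv i h)) ∈ DSpan d h T := by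
      have := DSpan_apply_mem d h T (mulOpC_mem d h a) hgen
      rwa [mulOp_apply, ← Polynomial.C_mul, ← toK_mul] at this
    have h3 : Polynomial.X * Polynomial.C (toK (a * MvPolynomial.pderiv i h))
        ∈ DSpan d h T := by
      have := DSpan_apply_mem d h T (mulOpX_mem d h) h2
      rwa [mulOp_apply] at this
    have heq : Polynomial.C (toK (h * MvPolynomial.pderiv i a))
        = (Polynomial.C (toK (a * MvPolynomial.pderiv i h))
            + Polynomial.C (toK (h * MvPolynomial.pderiv i a))
            + Polynomial.X * Polynomial.C (toK (a * MvPolynomial.pderiv i h)))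
          - Polynomial.C (toK (a * MvPolynomial.pderiv i h))
          - Polynomial.X * Polynomial.C (toK (a * MvPolynomial.pderiv i h)) := by
      ring
    show Polynomial.C (toK (h * MvPolynomial.pderiv i a)) ∈ DSpan d h T
    rw [heq]
    exact Submodule.sub_mem (DSpan d h T) (Submodule.sub_mem (DSpan d h T) h1 h2) h3
  -- W is closed under multiplication by constants
  have hWC : ∀ (c : ℂ) (a : OO n), a ∈ W → MvPolynomial.C c * a ∈ W := fun c a ha =>
    hWmul (MvPolynomial.C c) a ha
  -- some partial of h is nonzero
  have htd : h.totalDegree ≠ 0 := by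
    intro htd0
    apply h0
    have := eq_C_of_totalDegree_zero htd0
    rw [this]
    have hc0 : MvPolynomial.coeff 0 h = 0 := by
      rw [← MvPolynomial.constantCoeff_eq (σ := Fin n) (R := ℂ)]
      exact hnu
    rw [hc0, map_zero]
  obtain ⟨i0, hi0⟩ := exists_pderiv_ne_zero htd
  -- conclude : 1 ∈ W, i.e. h·h^s is in the span
  have hone : (1 : OO n) ∈ W :=
    one_mem_of_pderiv_stable W hWC hWD (MvPolynomial.pderiv i0 h).totalDegree
      (MvPolynomial.pderiv i0 h) (hWpd i0) hi0 le_rfl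
  have hmain : Polynomial.C (toK h) ∈ DSpan d h T := by
    have : Polynomial.C (toK (h * 1)) ∈ DSpan d h T := hone
    rwa [mul_one] at this
  refine ⟨fun b => ⟨?_, ?_⟩, hmain⟩
  · -- forward direction
    rintro ⟨P, hP, Pi, hPi, hb⟩
    have hPh : P (Polynomial.C (toK h)) ∈ DSpan d h T := DSpan_apply_mem d h T hP hmain
    have hsum : (∑ i : Fin n, Pi i (Polynomial.C (toK (MvPolynomial.pderiv i h))))
        ∈ DSpan d h T := by
      refine Submodule.sum_mem _ fun i _ => ?_
      exact DSpan_apply_mem d h T (hPi i) (mem_DSpan_of_mem d h T ⟨i, rfl⟩)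
    have hbmem : bK b ∈ DSpan d h T := by
      rw [hb]
      exact Submodule.add_mem _ hPh hsum
    exact DSpan_eq_sum d h hbmem
  · -- backward direction
    rintro ⟨Qi, hQi, hb⟩
    exact ⟨0, zero_mem _, Qi, hQi, by simpa using hb⟩
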